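/- Let Λ be an integral lattice in a Euclidean space E whose minimum m is even, let x₀ ∈ Λ with N(x₀) = 2m − 2, let S₀ = {x ∈ Λ : N(x) = m and ⟨x₀, x⟩ = m − 1}, and let 𝓔(x₀, 2m+2) = {y ∈ Λ : N(y) = 2m+2 and y ≡ x₀ (mod 2)}. Assume 𝓔(x₀, 2m+2) is nonempty. Then the dimension of the ℝ-linear span of 𝓔(x₀, 2m+2) equals the dimension of the ℝ-linear span of S₀ minus 1. -/
import Mathlib


open scoped InnerProductSpace

/-- Proposition 1.7, second part. With `Λ` integral of even minimum
`m`, `x₀ ∈ Λ` of norm `2m − 2`, `S₀ = {x ∈ S(Λ) | ⟨x₀, x⟩ = m − 1}` and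
`𝓔(x₀, 2m+2)` nonempty, we have `rk 𝓔(x₀, 2m+2) = rk S₀ − 1`. -/
theorem rank_E_eq_rank_S0_sub_one
    {E : Type*} [NormedAddCommGroup E] [InnerProductSpace ℝ E] [FiniteDimensional ℝ E]
    (Λ : AddSubgroup E) (hdisc : DiscreteTopology Λ) (m : ℝ)
    (hmin : IsLeast {r : ℝ | ∃ x ∈ Λ, x ≠ 0 ∧ ⟪x, x⟫_ℝ = r} m)
    (hintegral : ∀ x ∈ Λ, ∀ y ∈ Λ, ∃ k : ℤ, ⟪x, y⟫_ℝ = (k : ℝ))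
    (hmeven : ∃ k : ℤ, m = 2 * (k : ℝ))
    (x₀ : E) (hx₀ : x₀ ∈ Λ) (hx₀N : ⟪x₀, x₀⟫_ℝ = 2 * m - 2)
    (S₀ : Set E) (hS₀ : S₀ = {x : E | x ∈ Λ ∧ ⟪x, x⟫_ℝ = m ∧ ⟪x₀, x⟫_ℝ = m - 1})
    (𝓔 : Set E)
    (h𝓔 : 𝓔 = {y : E | y ∈ Λ ∧ ⟪y, y⟫_ℝ = 2 * m + 2 ∧ ∃ z ∈ Λ, y - x₀ = (2 : ℝ) • z})
    (hne : 𝓔.Nonempty) :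
    Module.finrank ℝ (Submodule.span ℝ 𝓔) = Module.finrank ℝ (Submodule.span ℝ S₀) - 1 := by
  -- m > 0
  obtain ⟨w, hwΛ, hw0, hwm⟩ := hmin.1
  have hm0 : 0 < m := by
    have h1 : (0:ℝ) ≤ ⟪w, w⟫_ℝ := real_inner_self_nonneg
    have h2 : ⟪w, w⟫_ℝ ≠ 0 := inner_self_ne_zero.mpr hw0
    rw [hwm] at h1 h2
    exact h1.lt_of_ne (Ne.symm h2)
  have hm2 : 2 ≤ m := by
    obtain ⟨k, hk⟩ := hmeven
    have hk0 : (0:ℝ) < (k:ℝ) := by linarith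
    have hk1 : (1:ℤ) ≤ k := by exact_mod_cast hk0
    have : (1:ℝ) ≤ (k:ℝ) := by exact_mod_cast hk1
    linarith
  have hx₀ne : x₀ ≠ 0 := by
    intro h
    rw [h, inner_zero_left] at hx₀N
    linarith
  -- Key fact about elements of 𝓔
  have key : ∀ y ∈ 𝓔, ⟪x₀, y⟫_ℝ = 0 ∧
      ∃ x ∈ S₀, ∃ x' ∈ S₀, x - x' = y ∧ x + x' = x₀ := by
    intro y hy
    rw [h𝓔] at hy
    obtain ⟨hyΛ, hyN, z, hzΛ, hz⟩ := hy
    have hy_eq : y = (2:ℝ) • z + x₀ := sub_eq_iff_eq_add.mp hz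
    have comm : ⟪z, x₀⟫_ℝ = ⟪x₀, z⟫_ℝ := real_inner_comm x₀ z
    have e1 : ⟪z, z⟫_ℝ + ⟪x₀, z⟫_ℝ = 1 := by
      have h' := hyN
      rw [hy_eq, inner_add_add_self] at h'
      simp only [real_inner_smul_left, real_inner_smul_right, hx₀N] at h'
      linarith
    have hz0 : z ≠ 0 := by
      intro h
      rw [h, smul_zero, zero_add] at hy_eq
      rw [hy_eq, hx₀N] at hyN
      linarith
    have hxz0 : x₀ + z ≠ 0 := by
      intro h
      have hz' : z = -x₀ := eq_neg_of_add_eq_zero_right h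
      have hy' : y = -x₀ := by rw [hy_eq, hz']; module
      rw [hy', inner_neg_neg, hx₀N] at hyN
      linarith
    have hb1 : m ≤ ⟪z, z⟫_ℝ := hmin.2 ⟨z, hzΛ, hz0, rfl⟩
    have hb2 : m ≤ ⟪x₀ + z, x₀ + z⟫_ℝ := hmin.2 ⟨x₀ + z, add_mem hx₀ hzΛ, hxz0, rfl⟩
    have h2 : ⟪x₀ + z, x₀ + z⟫_ℝ = (2*m-2) + ⟪x₀, z⟫_ℝ + ⟪z, x₀⟫_ℝ + ⟪z, z⟫_ℝ := by
      rw [inner_add_add_self, hx₀N]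
    have hβm : ⟪z, z⟫_ℝ = m := by linarith
    have hαm : ⟪x₀, z⟫_ℝ = 1 - m := by linarith
    have hperp : ⟪x₀, y⟫_ℝ = 0 := by
      rw [hy_eq, inner_add_right, real_inner_smul_right, hx₀N, hαm]
      ring
    refine ⟨hperp, x₀ + z, ?_, -z, ?_, ?_, ?_⟩
    · rw [hS₀]
      refine ⟨add_mem hx₀ hzΛ, ?_, ?_⟩
      · rw [inner_add_add_self, hx₀N, comm, hαm, hβm]; ring
      · rw [inner_add_right, hx₀N, hαm]; ring
    · rw [hS₀]
      refine ⟨neg_mem hzΛ, ?_, ?_⟩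
      · rw [inner_neg_neg]; exact hβm
      · rw [inner_neg_right, hαm]; ring
    · rw [hy_eq]; module
    · module
  -- Converse: S₀ maps into 𝓔
  have keyB : ∀ x ∈ S₀, (2:ℝ) • x - x₀ ∈ 𝓔 := by
    intro x hx
    rw [hS₀] at hx
    obtain ⟨hxΛ, hxN, hxI⟩ := hx
    rw [h𝓔]
    refine ⟨?_, ?_, x - x₀, sub_mem hxΛ hx₀, by module⟩
    · have h2x : (2:ℝ) • x = x + x := by module
      rw [h2x]
      exact sub_mem (add_mem hxΛ hxΛ) hx₀
    · rw [inner_sub_sub_self]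
      simp only [real_inner_smul_left, real_inner_smul_right]
      have comm : ⟪x, x₀⟫_ℝ = ⟪x₀, x⟫_ℝ := real_inner_comm x₀ x
      rw [hxN, hx₀N, comm, hxI]
      ring
  set V := Submodule.span ℝ 𝓔 with hV
  set W := Submodule.span ℝ S₀ with hW
  obtain ⟨y₀, hy₀⟩ := hne
  obtain ⟨-, a, ha, b, hb, -, hab⟩ := key y₀ hy₀
  have hx₀W : x₀ ∈ W := by
    rw [← hab]
    exact add_mem (Submodule.subset_span ha) (Submodule.subset_span hb)
  have hEW : 𝓔 ⊆ (W : Set E) := by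
    intro y hy
    obtain ⟨-, x, hx, x', hx', hsub, -⟩ := key y hy
    rw [← hsub]
    exact sub_mem (Submodule.subset_span hx) (Submodule.subset_span hx')
  have hWeq : W = V ⊔ (ℝ ∙ x₀) := by
    apply le_antisymm
    · rw [hW, Submodule.span_le]
      intro x hx
      have hyE : (2:ℝ) • x - x₀ ∈ V := Submodule.subset_span (keyB x hx)
      have hx₀s : x₀ ∈ (ℝ ∙ x₀) := Submodule.mem_span_singleton_self x₀
      have hxeq : x = (2⁻¹:ℝ) • ((2:ℝ) • x - x₀) + (2⁻¹:ℝ) • x₀ := by module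
      rw [SetLike.mem_coe, hxeq]
      exact add_mem (Submodule.smul_mem _ _ (Submodule.mem_sup_left hyE))
        (Submodule.smul_mem _ _ (Submodule.mem_sup_right hx₀s))
    · apply sup_le
      · rw [hV, Submodule.span_le]; exact hEW
      · rw [Submodule.span_singleton_le_iff_mem]; exact hx₀W
  have hx₀V : x₀ ∉ V := by
    intro hmem
    have hperpV : ∀ v ∈ V, ⟪x₀, v⟫_ℝ = 0 := by
      intro v hv
      induction hv using Submodule.span_induction with
      | mem u hu => exact (key u hu).1
      | zero => exact inner_zero_right x₀
      | add u v _ _ hu hv => rw [inner_add_right, hu, hv]; ring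
      | smul c u _ hu => rw [real_inner_smul_right, hu]; ring
    have := hperpV x₀ hmem
    rw [hx₀N] at this
    linarith
  have hinf : V ⊓ (ℝ ∙ x₀) = ⊥ := by
    rw [eq_bot_iff]
    rintro v ⟨hv, hv'⟩
    obtain ⟨c, rfl⟩ := Submodule.mem_span_singleton.mp hv'
    rcases eq_or_ne c 0 with rfl | hc
    · simp
    · exact absurd (by simpa [inv_smul_smul₀ hc] using Submodule.smul_mem V c⁻¹ hv) hx₀V
  have hfin := Submodule.finrank_sup_add_finrank_inf_eq V (ℝ ∙ x₀)
  rw [hinf, finrank_bot, finrank_span_singleton hx₀ne] at hfin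
  rw [hWeq]
  omega
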